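/- Let ν be a measure on (0,∞) with ∫ min(y, y²) ν(dy) < ∞. Suppose there are α ∈ (0,1], a constant C > 0, x₀ ∈ (0,1), and a function ℓ : (0,∞) → (0,∞) that is measurable, slowly varying at 0, and bounded above and away from 0 on every compact subinterval of (0,∞), such that ∫_{(0,∞)} (e^{−x·y} − 1 + x·y) ν(dy) ≤ C · x^{1+α} · ℓ(x) for all x ∈ (0, x₀]. Then for every δ ∈ (0,α), ∫_{(1,∞)} y^{1+δ} ν(dy) < ∞. -/

import Mathlib

open Real Set Filter MeasureTheory

private lemma pow_rpow_swap (n : ℕ) (t : ℝ) : ((2:ℝ)^n)^t = ((2:ℝ)^t)^n := by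
  rw [← Real.rpow_natCast 2 n, ← Real.rpow_mul (by norm_num), mul_comm,
    Real.rpow_mul (by norm_num), Real.rpow_natCast]

/-- If `ν` is a measure on `(0,∞)` with `∫ min(y,y²) ν(dy) < ∞` and
`∫ (e^{−xy} − 1 + xy) ν(dy) ≤ C x^{1+α} ℓ(x)` for small `x > 0`, where `ℓ` is
slowly varying at `0`, then `∫_{(1,∞)} y^{1+δ} ν(dy) < ∞` for every `δ ∈ (0,α)`. -/
theorem stmt_11 (ν : Measure ℝ)
    (hν_min : (∫⁻ y in Ioi (0 : ℝ), ENNReal.ofReal (min y (y ^ 2)) ∂ν) < ⊤)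
    (α : ℝ) (hα0 : 0 < α) (hα1 : α ≤ 1) (C : ℝ) (hC : 0 < C)
    (x₀ : ℝ) (hx₀0 : 0 < x₀) (hx₀1 : x₀ < 1)
    (ℓ : ℝ → ℝ) (hℓ_pos : ∀ x > 0, 0 < ℓ x) (hℓ_meas : Measurable ℓ)
    (hℓ_sv : ∀ c > 0, Tendsto (fun x => ℓ (c * x) / ℓ x) (nhdsWithin 0 (Ioi 0)) (nhds 1))
    (hℓ_bdd : ∀ a b : ℝ, 0 < a → a ≤ b →
      ∃ m M : ℝ, 0 < m ∧ ∀ x ∈ Icc a b, m ≤ ℓ x ∧ ℓ x ≤ M)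
    (hbound : ∀ x ∈ Ioc (0 : ℝ) x₀,
      (∫⁻ y in Ioi (0 : ℝ), ENNReal.ofReal (exp (-(x * y)) - 1 + x * y) ∂ν)
        ≤ ENNReal.ofReal (C * x ^ (1 + α) * ℓ x)) :
    ∀ δ : ℝ, 0 < δ → δ < α →
      (∫⁻ y in Ioi (1 : ℝ), ENNReal.ofReal (y ^ (1 + δ)) ∂ν) < ⊤ := by
  intro δ hδ0 hδα
  -- Step 1: tail bound
  have tail : ∀ x ∈ Ioc (0:ℝ) x₀,
      (∫⁻ y in Ioi (2/x), ENNReal.ofReal y ∂ν) ≤ ENNReal.ofReal (2*C*x^α * ℓ x) := by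
    rintro x ⟨hx0, hxx⟩
    have key : ENNReal.ofReal (x/2) * ∫⁻ y in Ioi (2/x), ENNReal.ofReal y ∂ν
        ≤ ENNReal.ofReal (C * x^(1+α) * ℓ x) := by
      rw [← lintegral_const_mul _ (by fun_prop : Measurable fun y : ℝ => ENNReal.ofReal y)]
      calc ∫⁻ y in Ioi (2/x), ENNReal.ofReal (x/2) * ENNReal.ofReal y ∂ν
          ≤ ∫⁻ y in Ioi (2/x), ENNReal.ofReal (exp (-(x*y)) - 1 + x*y) ∂ν := by
            apply setLIntegral_mono (by fun_prop)
            intro y hy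
            rw [← ENNReal.ofReal_mul (by positivity)]
            apply ENNReal.ofReal_le_ofReal
            have hxy : 2 < x * y := by
              have hy' : 2/x < y := hy
              rw [div_lt_iff₀ hx0] at hy'; nlinarith
            have := Real.exp_nonneg (-(x*y))
            nlinarith
        _ ≤ ∫⁻ y in Ioi 0, ENNReal.ofReal (exp (-(x*y)) - 1 + x*y) ∂ν :=
            lintegral_mono_set (Ioi_subset_Ioi (by positivity))
        _ ≤ ENNReal.ofReal (C * x^(1+α) * ℓ x) := hbound x ⟨hx0, hxx⟩
    have h2 : ENNReal.ofReal (x/2) ≠ 0 := by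
      simp [ENNReal.ofReal_eq_zero]; linarith
    rw [← ENNReal.mul_le_mul_iff_right h2 ENNReal.ofReal_ne_top,
      ← ENNReal.ofReal_mul (by positivity)]
    convert key using 2
    rw [Real.rpow_add hx0, Real.rpow_one]; ring
  -- geometric data
  set ε : ℝ := (α - δ)/2 with hε_def
  have hε0 : 0 < ε := by simp [hε_def]; linarith
  set R : ℝ := (2:ℝ)^ε with hR_def
  have hR1 : 1 < R := Real.one_lt_rpow_iff_of_pos (by norm_num) |>.mpr (Or.inl ⟨by norm_num, hε0⟩)
  have hR0 : 0 < R := by linarith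
  -- sequence x_n = x₀ / 2^n
  set s : ℕ → ℝ := fun n => ℓ (x₀ / 2^n) with hs_def
  have hxn_pos : ∀ n : ℕ, (0:ℝ) < x₀ / 2^n := fun n => by positivity
  have hxn_mem : ∀ n : ℕ, x₀ / 2^n ∈ Ioc (0:ℝ) x₀ := by
    intro n
    refine ⟨hxn_pos n, ?_⟩
    rw [div_le_iff₀ (by positivity)]
    nlinarith [one_le_pow₀ (by norm_num : (1:ℝ) ≤ 2) (n := n)]
  have hs_pos : ∀ n, 0 < s n := fun n => hℓ_pos _ (hxn_pos n)
  -- ratio tends to 1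
  have hx_tend : Tendsto (fun n : ℕ => x₀ / 2^n) atTop (nhdsWithin 0 (Ioi 0)) := by
    apply tendsto_nhdsWithin_of_tendsto_nhds_of_eventually_within
    · exact Tendsto.div_atTop tendsto_const_nhds (tendsto_pow_atTop_atTop_of_one_lt (by norm_num))
    · exact Eventually.of_forall fun n => hxn_pos n
  have hratio : Tendsto (fun n : ℕ => s (n+1) / s n) atTop (nhds 1) := by
    have h := (hℓ_sv (1/2) (by norm_num)).comp hx_tend
    convert h using 2 with n
    simp only [Function.comp_apply, hs_def]
    congr 2
    rw [pow_succ]; ring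
  have hevent : ∀ᶠ n : ℕ in atTop, s (n+1) / s n ≤ R :=
    hratio.eventually (ge_mem_nhds hR1)
  obtain ⟨N, hN⟩ := eventually_atTop.mp hevent
  -- s n ≤ K * R^n
  set K : ℝ := ∑ i ∈ Finset.range (N+1), s i with hK_def
  have hK_pos : 0 < K :=
    Finset.sum_pos (fun i _ => hs_pos i) ⟨0, Finset.mem_range.mpr (Nat.succ_pos N)⟩
  have hle_K : ∀ n ≤ N, s n ≤ K := by
    intro n hn
    exact Finset.single_le_sum (fun i _ => (hs_pos i).le)
      (Finset.mem_range.mpr (Nat.lt_succ_of_le hn))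
  have hK : ∀ n, s n ≤ K * R^n := by
    have hgen : ∀ n, N ≤ n → s n ≤ K * R^n := by
      intro n hn
      induction n, hn using Nat.le_induction with
      | base => calc s N ≤ K := hle_K N le_rfl
                  _ ≤ K * R^N := le_mul_of_one_le_right hK_pos.le (one_le_pow₀ hR1.le)
      | succ n hn ih =>
        have h1 : s (n+1) ≤ R * s n := by
          have := hN n hn
          rw [div_le_iff₀ (hs_pos n)] at this
          linarith [this]
        calc s (n+1) ≤ R * s n := h1
          _ ≤ R * (K * R^n) := by nlinarith [ih, hR0]
          _ = K * R^(n+1) := by ring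
    intro n
    rcases le_or_gt N n with h | h
    · exact hgen n h
    · calc s n ≤ K := hle_K n h.le
        _ ≤ K * R^n := le_mul_of_one_le_right hK_pos.le (one_le_pow₀ hR1.le)
  -- breakpoints
  set b : ℕ → ℝ := fun n => 2 * 2^n / x₀ with hb_def
  have hb_pos : ∀ n, 0 < b n := fun n => by positivity
  have hb_eq : ∀ n : ℕ, 2 / (x₀ / 2^n) = b n := by
    intro n; simp only [hb_def]; field_simp
  -- cover
  have hcover : Ioi (1:ℝ) ⊆ Ioc 1 (b 0) ∪ ⋃ n, Ioc (b n) (b (n+1)) := by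
    intro y hy
    by_cases hyb : y ≤ b 0
    · exact Or.inl ⟨hy, hyb⟩
    · push_neg at hyb
      have hex : ∃ n : ℕ, y ≤ b n := by
        obtain ⟨n, hn⟩ := pow_unbounded_of_one_lt y (by norm_num : (1:ℝ) < 2)
        refine ⟨n, hn.le.trans ?_⟩
        simp only [hb_def]
        rw [le_div_iff₀ hx₀0]
        nlinarith [pow_pos (by norm_num : (0:ℝ) < 2) n]
      classical
      let m := Nat.find hex
      have hm_spec : y ≤ b m := Nat.find_spec hex
      have hm_pos : m ≠ 0 := by
        intro h0
        rw [h0] at hm_spec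
        exact absurd hm_spec (not_le.mpr hyb)
      obtain ⟨k, hk⟩ := Nat.exists_eq_succ_of_ne_zero hm_pos
      right
      refine mem_iUnion.mpr ⟨k, ?_, ?_⟩
      · have : ¬ (y ≤ b k) := Nat.find_min hex (by omega)
        exact not_le.mp this
      · rw [← Nat.succ_eq_add_one, ← hk]; exact hm_spec
  -- piece 1 finite
  have hpiece1 : (∫⁻ y in Ioc (1:ℝ) (b 0), ENNReal.ofReal (y ^ (1+δ)) ∂ν) < ⊤ := by
    have hb01 : (1:ℝ) ≤ b 0 := by
      simp only [hb_def, pow_zero, mul_one]; rw [le_div_iff₀ hx₀0]; linarith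
    have hmono : (∫⁻ y in Ioc (1:ℝ) (b 0), ENNReal.ofReal (y ^ (1+δ)) ∂ν)
        ≤ ∫⁻ _ in Ioc (1:ℝ) (b 0), ENNReal.ofReal ((b 0) ^ (1+δ)) ∂ν := by
      apply setLIntegral_mono (by fun_prop)
      intro y hy
      exact ENNReal.ofReal_le_ofReal
        (Real.rpow_le_rpow (by linarith [hy.1]) hy.2 (by linarith))
    rw [setLIntegral_const] at hmono
    have hν_fin : ν (Ioc (1:ℝ) (b 0)) < ⊤ := by
      have h1 : ν (Ioc (1:ℝ) (b 0)) = ∫⁻ _ in Ioc (1:ℝ) (b 0), 1 ∂ν := (setLIntegral_one _).symm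
      rw [h1]
      calc (∫⁻ _ in Ioc (1:ℝ) (b 0), (1:ENNReal) ∂ν)
          ≤ ∫⁻ y in Ioc (1:ℝ) (b 0), ENNReal.ofReal (min y (y^2)) ∂ν := by
            apply setLIntegral_mono (by fun_prop)
            intro y hy
            rw [show (1:ENNReal) = ENNReal.ofReal 1 by simp]
            apply ENNReal.ofReal_le_ofReal
            have h1y : 1 ≤ y := hy.1.le
            exact le_min h1y (by nlinarith)
        _ ≤ ∫⁻ y in Ioi (0:ℝ), ENNReal.ofReal (min y (y^2)) ∂ν :=
            lintegral_mono_set (fun y hy => lt_of_lt_of_le one_pos (le_of_lt hy.1))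
        _ < ⊤ := hν_min
    exact lt_of_le_of_lt hmono (ENNReal.mul_lt_top ENNReal.ofReal_lt_top hν_fin)
  -- constants for the series
  set D : ℝ := (4/x₀)^δ * (2*C*x₀^α*K) with hD_def
  have hD_pos : 0 < D := by
    apply mul_pos (Real.rpow_pos_of_pos (by positivity) δ)
    positivity
  set r : ℝ := (2:ℝ)^(δ - α + ε) with hr_def
  have hr_pos : 0 < r := Real.rpow_pos_of_pos (by norm_num) _
  have hr_lt1 : r < 1 := by
    apply Real.rpow_lt_one_of_one_lt_of_neg (by norm_num)
    simp [hε_def]; linarith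
  -- real-valued term bound
  have hreal : ∀ n : ℕ, (b (n+1))^δ * (2*C*(x₀/2^n)^α * s n) ≤ D * r^n := by
    intro n
    have hu : (0:ℝ) < 2^n := by positivity
    have e1 : (b (n+1):ℝ)^δ = (4/x₀)^δ * ((2:ℝ)^δ)^n := by
      simp only [hb_def]
      rw [show (2 * 2^(n+1) / x₀ : ℝ) = (4/x₀) * 2^n by rw [pow_succ]; ring,
        Real.mul_rpow (by positivity) (by positivity), pow_rpow_swap]
    have e2 : ((x₀/2^n:ℝ))^α = x₀^α * ((2:ℝ)^(-α))^n := by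
      rw [Real.div_rpow hx₀0.le (by positivity), pow_rpow_swap, div_eq_mul_inv, ← inv_pow,
        ← Real.rpow_neg (by norm_num)]
    have e3 : r = (2:ℝ)^δ * (2:ℝ)^(-α) * (2:ℝ)^ε := by
      rw [hr_def, show δ - α + ε = δ + (-α) + ε by ring, Real.rpow_add (by norm_num),
        Real.rpow_add (by norm_num)]
    have hsn := hK n
    have hnn : (0:ℝ) ≤ (4/x₀)^δ * ((2:ℝ)^δ)^n * (2*C*(x₀^α * ((2:ℝ)^(-α))^n)) := by
      have := Real.rpow_pos_of_pos (show (0:ℝ) < 4/x₀ by positivity) δ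
      have := Real.rpow_pos_of_pos (show (0:ℝ) < 2 by norm_num) δ
      have := Real.rpow_pos_of_pos (show (0:ℝ) < 2 by norm_num) (-α)
      have := Real.rpow_pos_of_pos hx₀0 α
      positivity
    calc (b (n+1))^δ * (2*C*(x₀/2^n)^α * s n)
        = ((4/x₀)^δ * ((2:ℝ)^δ)^n * (2*C*(x₀^α * ((2:ℝ)^(-α))^n))) * s n := by
          rw [e1, e2]; ring
      _ ≤ ((4/x₀)^δ * ((2:ℝ)^δ)^n * (2*C*(x₀^α * ((2:ℝ)^(-α))^n))) * (K * R^n) := by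
          exact mul_le_mul_of_nonneg_left hsn hnn
      _ = D * r^n := by
          rw [hD_def, e3, hR_def]; ring
  -- the series of tail pieces
  have hterm : ∀ n : ℕ, (∫⁻ y in Ioc (b n) (b (n+1)), ENNReal.ofReal (y ^ (1+δ)) ∂ν)
      ≤ ENNReal.ofReal D * (ENNReal.ofReal r)^n := by
    intro n
    have hbd : ∀ y ∈ Ioc (b n) (b (n+1)),
        ENNReal.ofReal (y ^ (1+δ)) ≤ ENNReal.ofReal ((b (n+1))^δ) * ENNReal.ofReal y := by
      intro y hy
      have hy0 : 0 < y := lt_trans (hb_pos n) hy.1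
      rw [← ENNReal.ofReal_mul (Real.rpow_nonneg (hb_pos (n+1)).le δ)]
      apply ENNReal.ofReal_le_ofReal
      calc y^(1+δ) = y * y^δ := by rw [Real.rpow_add hy0, Real.rpow_one]
        _ ≤ y * (b (n+1))^δ := by
            apply mul_le_mul_of_nonneg_left (Real.rpow_le_rpow hy0.le hy.2 hδ0.le) hy0.le
        _ = (b (n+1))^δ * y := by ring
    calc (∫⁻ y in Ioc (b n) (b (n+1)), ENNReal.ofReal (y ^ (1+δ)) ∂ν)
        ≤ ∫⁻ y in Ioc (b n) (b (n+1)), ENNReal.ofReal ((b (n+1))^δ) * ENNReal.ofReal y ∂ν :=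
          setLIntegral_mono (by fun_prop) hbd
      _ = ENNReal.ofReal ((b (n+1))^δ) * ∫⁻ y in Ioc (b n) (b (n+1)), ENNReal.ofReal y ∂ν :=
          lintegral_const_mul _ (by fun_prop)
      _ ≤ ENNReal.ofReal ((b (n+1))^δ) * ∫⁻ y in Ioi (b n), ENNReal.ofReal y ∂ν := by
          gcongr
          exact Ioc_subset_Ioi_self
      _ ≤ ENNReal.ofReal ((b (n+1))^δ) * ENNReal.ofReal (2*C*(x₀/2^n)^α * s n) := by
          gcongr
          have := tail (x₀/2^n) (hxn_mem n)
          rwa [hb_eq n] at this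
      _ = ENNReal.ofReal ((b (n+1))^δ * (2*C*(x₀/2^n)^α * s n)) := by
          rw [← ENNReal.ofReal_mul (Real.rpow_nonneg (hb_pos (n+1)).le δ)]
      _ ≤ ENNReal.ofReal (D * r^n) := ENNReal.ofReal_le_ofReal (hreal n)
      _ = ENNReal.ofReal D * (ENNReal.ofReal r)^n := by
          rw [ENNReal.ofReal_mul hD_pos.le, ENNReal.ofReal_pow hr_pos.le]
  -- sum up
  have hsum : (∑' n : ℕ, ∫⁻ y in Ioc (b n) (b (n+1)), ENNReal.ofReal (y ^ (1+δ)) ∂ν) < ⊤ := by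
    calc (∑' n : ℕ, ∫⁻ y in Ioc (b n) (b (n+1)), ENNReal.ofReal (y ^ (1+δ)) ∂ν)
        ≤ ∑' n : ℕ, ENNReal.ofReal D * (ENNReal.ofReal r)^n := ENNReal.tsum_le_tsum hterm
      _ = ENNReal.ofReal D * ∑' n : ℕ, (ENNReal.ofReal r)^n := ENNReal.tsum_mul_left
      _ = ENNReal.ofReal D * (1 - ENNReal.ofReal r)⁻¹ := by rw [ENNReal.tsum_geometric]
      _ < ⊤ := by
          apply ENNReal.mul_lt_top ENNReal.ofReal_lt_top
          exact ENNReal.inv_lt_top.mpr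
            (tsub_pos_iff_lt.mpr (ENNReal.ofReal_lt_one.mpr hr_lt1))
  calc (∫⁻ y in Ioi (1:ℝ), ENNReal.ofReal (y ^ (1+δ)) ∂ν)
      ≤ ∫⁻ y in Ioc 1 (b 0) ∪ ⋃ n, Ioc (b n) (b (n+1)), ENNReal.ofReal (y ^ (1+δ)) ∂ν :=
        lintegral_mono_set hcover
    _ ≤ (∫⁻ y in Ioc (1:ℝ) (b 0), ENNReal.ofReal (y ^ (1+δ)) ∂ν)
        + ∫⁻ y in ⋃ n, Ioc (b n) (b (n+1)), ENNReal.ofReal (y ^ (1+δ)) ∂ν :=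
        lintegral_union_le _ _ _
    _ ≤ (∫⁻ y in Ioc (1:ℝ) (b 0), ENNReal.ofReal (y ^ (1+δ)) ∂ν)
        + ∑' n : ℕ, ∫⁻ y in Ioc (b n) (b (n+1)), ENNReal.ofReal (y ^ (1+δ)) ∂ν := by
        gcongr
        exact lintegral_iUnion_le _ _
    _ < ⊤ := ENNReal.add_lt_top.mpr ⟨hpiece1, hsum⟩
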